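/- arXiv:math/0410452 — 2 statements merged into one kernel-verified Lean document; each statement's English description precedes it below -/
import Mathlib

section
/- Let D be a bounded open domain in ℝ³ with Lipschitz boundary ∂D, let k > 0 be a constant, let a ≥ 0, and let f : ℝ → ℝ satisfy the sign condition u·f(u) ≥ 0 for all u with |u| ≥ a. Then every classical solution u of the boundary value problem (−Δ + k²)u + f(u) = 0 in D, u = 0 on ∂D, satisfies the pointwise bound |u(x)| ≤ a for all x ∈ D̄. -/
open MeasureTheory

/-- The Laplacian of `u : ℝⁿ → ℝ`: the sum of the pure second partial derivatives. -/
noncomputable def laplacian {n : ℕ} (u : EuclideanSpace ℝ (Fin n) → ℝ)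
    (x : EuclideanSpace ℝ (Fin n)) : ℝ :=
  ∑ i : Fin n,
    fderiv ℝ (fun y => fderiv ℝ u y (EuclideanSpace.single i (1 : ℝ))) x
      (EuclideanSpace.single i (1 : ℝ))

/-- `u` is a classical solution of `(-Δ + k²)u + g(u) = 0` in `D`, `u = 0` on `∂D`. -/
def IsClassicalSolution {n : ℕ} (k : ℝ) (g : ℝ → ℝ)
    (D : Set (EuclideanSpace ℝ (Fin n))) (u : EuclideanSpace ℝ (Fin n) → ℝ) : Prop :=
  ContinuousOn u (closure D) ∧ ContDiffOn ℝ 2 u D ∧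
    (∀ x ∈ D, -laplacian u x + k ^ 2 * u x + g (u x) = 0) ∧
    (∀ x ∈ frontier D, u x = 0)

/-- An open set `D ⊆ ℝ³` has Lipschitz boundary: near each boundary point, after a rigid
rotation, `D` coincides with the region above the graph of a Lipschitz function. -/
def HasLipschitzBoundary (D : Set (EuclideanSpace ℝ (Fin 3))) : Prop :=
  ∀ x ∈ frontier D,
    ∃ (U : Set (EuclideanSpace ℝ (Fin 3)))
      (g : EuclideanSpace ℝ (Fin 3) ≃ₗᵢ[ℝ] EuclideanSpace ℝ (Fin 3))
      (φ : EuclideanSpace ℝ (Fin 2) → ℝ) (L : NNReal),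
      IsOpen U ∧ x ∈ U ∧ LipschitzWith L φ ∧
        D ∩ U = {y ∈ U | φ (WithLp.toLp 2 (fun i : Fin 2 => g y i.castSucc)) < g y 2}


open Filter Topology

/-- Second derivative test at a local max: the second derivative is nonpositive. -/
lemma second_deriv_nonpos_of_isLocalMax {h h' : ℝ → ℝ} {c : ℝ}
    (hmax : IsLocalMax h 0)
    (hd : ∀ᶠ t in 𝓝 (0 : ℝ), HasDerivAt h (h' t) t)
    (hd2 : HasDerivAt h' c 0) : c ≤ 0 := by
  by_contra hc
  push_neg at hc
  have h0 : h' 0 = 0 := hmax.hasDerivAt_eq_zero hd.self_of_nhds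
  have hslope : Tendsto (slope h' 0) (𝓝[≠] (0:ℝ)) (𝓝 c) :=
    hasDerivAt_iff_tendsto_slope.mp hd2
  have hpos : ∀ᶠ t in 𝓝[≠] (0:ℝ), 0 < slope h' 0 t :=
    hslope.eventually (eventually_gt_nhds hc)
  -- extract a δ > 0
  rw [eventually_nhdsWithin_iff] at hpos
  obtain ⟨δ₁, hδ₁, H1⟩ := Metric.eventually_nhds_iff.mp hpos
  obtain ⟨δ₂, hδ₂, H2⟩ := Metric.eventually_nhds_iff.mp hd
  obtain ⟨δ₃, hδ₃, H3⟩ := Metric.eventually_nhds_iff.mp hmax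
  set δ : ℝ := min δ₁ (min δ₂ δ₃) / 2 with hδdef
  have hδpos : 0 < δ := by positivity
  have hδlt : ∀ t ∈ Set.Icc (0:ℝ) δ, dist t 0 < min δ₁ (min δ₂ δ₃) := by
    intro t ht
    rw [Real.dist_eq, sub_zero, abs_of_nonneg ht.1]
    have := ht.2
    have : t ≤ min δ₁ (min δ₂ δ₃) / 2 := ht.2
    have hm : 0 < min δ₁ (min δ₂ δ₃) := lt_min hδ₁ (lt_min hδ₂ hδ₃)
    linarith
  have hmono : StrictMonoOn h (Set.Icc (0:ℝ) δ) := by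
    apply strictMonoOn_of_deriv_pos (convex_Icc _ _)
    · intro t ht
      have := H2 (lt_of_lt_of_le (hδlt t ht) (le_trans (min_le_right _ _) (min_le_left _ _)))
      exact this.differentiableAt.continuousAt.continuousWithinAt
    · intro t ht
      rw [interior_Icc] at ht
      have hdt : HasDerivAt h (h' t) t :=
        H2 (by
          have := hδlt t ⟨le_of_lt ht.1, le_of_lt ht.2⟩
          exact lt_of_lt_of_le this (le_trans (min_le_right _ _) (min_le_left _ _)))
      rw [hdt.deriv]
      have hs : 0 < slope h' 0 t := by
        apply H1
        · exact lt_of_lt_of_le (hδlt t ⟨le_of_lt ht.1, le_of_lt ht.2⟩) (min_le_left _ _)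
        · exact ne_of_gt ht.1
      rw [slope_def_field, h0, sub_zero, sub_zero, div_pos_iff] at hs
      rcases hs with ⟨h1, _⟩ | ⟨_, h2⟩
      · exact h1
      · linarith [ht.1]
  have hlt : h 0 < h δ :=
    hmono (Set.left_mem_Icc.mpr hδpos.le) (Set.right_mem_Icc.mpr hδpos.le) hδpos
  have : h δ ≤ h 0 := H3 (by
    have := hδlt δ (Set.right_mem_Icc.mpr hδpos.le)
    exact lt_of_lt_of_le this (le_trans (min_le_right _ _) (min_le_right _ _)))
  linarith

/-- Under the sign condition `u·f(u) ≥ 0` for `|u| ≥ a`, every classical solution of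
`(-Δ + k²)u + f(u) = 0` in `D`, `u = 0` on `∂D`, satisfies `|u(x)| ≤ a` on `D̄`. -/
theorem apriori_bound_of_sign_condition
    (D : Set (EuclideanSpace ℝ (Fin 3))) (hD_open : IsOpen D)
    (hD_bdd : Bornology.IsBounded D) (hD_lip : HasLipschitzBoundary D)
    (k : ℝ) (hk : 0 < k) (a : ℝ) (ha : 0 ≤ a) (f : ℝ → ℝ)
    (hf_sign : ∀ u : ℝ, a ≤ |u| → 0 ≤ u * f u)
    (u : EuclideanSpace ℝ (Fin 3) → ℝ) (hu : IsClassicalSolution k f D u) :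
    ∀ x ∈ closure D, |u x| ≤ a := by
  intro x hx
  have hK_comp : IsCompact (closure D) := hD_bdd.isCompact_closure
  obtain ⟨x₀, hx₀K, hmaxOn⟩ := hK_comp.exists_isMaxOn ⟨x, hx⟩ hu.1.abs
  have hmaxle : ∀ y ∈ closure D, |u y| ≤ |u x₀| := hmaxOn
  set M := |u x₀| with hMdef
  suffices hM : M ≤ a from le_trans (hmaxle x hx) hM
  by_contra hMa
  push_neg at hMa
  have hMpos : 0 < M := lt_of_le_of_lt ha hMa
  have hx₀D : x₀ ∈ D := by
    rcases (closure_eq_interior_union_frontier D ▸ hx₀K) with h | h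
    · rwa [hD_open.interior_eq] at h
    · exfalso
      have := hu.2.2.2 x₀ h
      rw [hMdef, this, abs_zero] at hMpos
      exact lt_irrefl _ hMpos
  obtain ⟨s, hs1, hsu⟩ : ∃ s : ℝ, (s = 1 ∨ s = -1) ∧ s * u x₀ = M := by
    rcases abs_cases (u x₀) with ⟨h1, _⟩ | ⟨h1, _⟩
    · exact ⟨1, Or.inl rfl, by rw [one_mul, hMdef, h1]⟩
    · exact ⟨-1, Or.inr rfl, by rw [hMdef, h1]; ring⟩
  have hsabs : ∀ r : ℝ, s * r ≤ |r| := by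
    intro r; rcases hs1 with h | h <;> rw [h] <;> simp [neg_le_abs, le_abs_self]
  have hux : u x₀ = s * M := by
    rcases hs1 with h | h <;> rw [h] at hsu ⊢ <;> linarith
  -- differentiability facts
  have hu2 : ContDiffOn ℝ 2 u D := hu.2.1
  have hudiff : ∀ y ∈ D, DifferentiableAt ℝ u y := fun y hy =>
    (hu2.differentiableOn (by norm_num)).differentiableAt (hD_open.mem_nhds hy)
  have hΦ : ContDiffOn ℝ 1 (fderiv ℝ u) D :=
    hu2.fderiv_of_isOpen hD_open (by norm_num)
  have hΦdiff : DifferentiableAt ℝ (fderiv ℝ u) x₀ :=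
    (hΦ.differentiableOn (by norm_num)).differentiableAt (hD_open.mem_nhds hx₀D)
  have key : ∀ i : Fin 3,
      s * fderiv ℝ (fun y => fderiv ℝ u y (EuclideanSpace.single i (1:ℝ))) x₀
        (EuclideanSpace.single i (1:ℝ)) ≤ 0 := by
    intro i
    set v := EuclideanSpace.single i (1:ℝ) with hv
    set F : EuclideanSpace ℝ (Fin 3) → ℝ := fun y => fderiv ℝ u y v with hF
    have hFdiff : DifferentiableAt ℝ F x₀ := hΦdiff.clm_apply (differentiableAt_const v)
    set L : ℝ → EuclideanSpace ℝ (Fin 3) := fun t => x₀ + t • v with hL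
    have hline : ∀ t : ℝ, HasDerivAt L v t := fun t => by
      simpa [hL] using ((hasDerivAt_id t).smul_const v).const_add x₀
    have hL0 : L 0 = x₀ := by simp [hL]
    have hmem : ∀ᶠ t in 𝓝 (0:ℝ), L t ∈ D := by
      have hc : ContinuousAt L 0 := (hline 0).differentiableAt.continuousAt
      have := hc.preimage_mem_nhds (hL0 ▸ hD_open.mem_nhds hx₀D)
      filter_upwards [this] with t ht using ht
    have hmax : IsLocalMax (fun t => s * u (L t)) 0 := by
      filter_upwards [hmem] with t ht
      calc s * u (L t) ≤ |u (L t)| := hsabs _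
        _ ≤ M := hmaxle _ (subset_closure ht)
        _ = s * u (L 0) := by rw [hL0, hsu]
    have hd : ∀ᶠ t in 𝓝 (0:ℝ), HasDerivAt (fun t => s * u (L t)) (s * F (L t)) t := by
      filter_upwards [hmem] with t ht
      have h1 : HasDerivAt (fun t => u (L t)) (fderiv ℝ u (L t) v) t :=
        ((hudiff _ ht).hasFDerivAt).comp_hasDerivAt t (hline t)
      exact h1.const_mul s
    have hd2 : HasDerivAt (fun t => s * F (L t))
        (s * fderiv ℝ F x₀ v) 0 := by
      have h1 : HasDerivAt (fun t => F (L t)) (fderiv ℝ F x₀ v) 0 :=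
        (hFdiff.hasFDerivAt.comp_hasDerivAt_of_eq 0 (hline 0) hL0.symm)
      exact h1.const_mul s
    exact second_deriv_nonpos_of_isLocalMax hmax hd hd2
  have hlap : s * laplacian u x₀ ≤ 0 := by
    rw [laplacian, Finset.mul_sum]
    exact Finset.sum_nonpos fun i _ => key i
  have heq := hu.2.2.1 x₀ hx₀D
  have hf0 : 0 ≤ s * f (u x₀) := by
    have h := hf_sign (u x₀) (le_of_lt hMa)
    rw [hux] at h
    have h2 : 0 ≤ M * (s * f (s * M)) := by nlinarith
    have := (mul_nonneg_iff_of_pos_left hMpos).mp h2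
    rwa [hux]
  have hlap2 : laplacian u x₀ = k ^ 2 * u x₀ + f (u x₀) := by linarith
  have : s * laplacian u x₀ = k ^ 2 * M + s * f (u x₀) := by
    rcases hs1 with h | h <;> rw [hlap2, hux, h] <;> ring
  nlinarith [sq_nonneg k, mul_pos (mul_pos hk hk) hMpos]
end

section
/- Let D ⊆ ℝ³ be a bounded measurable set, let k > 0, let μ > 0, and let G : D × D → ℝ be a measurable kernel satisfying 0 ≤ G(x,y) ≤ e^{−k|x−y|}/(4π|x−y|) for all x, y ∈ D with x ≠ y. Suppose u : D → ℝ is a bounded measurable function and f : ℝ → ℝ satisfies |f(t)| ≤ μ for all t ∈ ℝ, and that u(x) = −∫_D G(x,y) f(u(y)) dy for every x ∈ D. Then sup over x ∈ D of |u(x)| ≤ μ/k². -/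
open MeasureTheory Measure Set Metric
open scoped ENNReal

lemma radial_real_integral (k : ℝ) (hk : 0 < k) :
    ∫ r in Ioi (0 : ℝ), r * Real.exp (-(k * r)) / (4 * Real.pi) =
      1 / (4 * Real.pi * k ^ 2) := by
  rw [integral_div]
  have h := Real.integral_rpow_mul_exp_neg_mul_Ioi (a := 2) (r := k) two_pos hk
  have h2 : ∫ t in Ioi (0:ℝ), t ^ ((2:ℝ) - 1) * Real.exp (-(k * t)) =
      ∫ t in Ioi (0:ℝ), t * Real.exp (-(k * t)) := by
    refine setIntegral_congr_fun measurableSet_Ioi fun t _ => ?_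
    norm_num
  rw [h2] at h
  rw [h, Real.Gamma_two]
  rw [show ((1:ℝ)/k) ^ (2:ℝ) = (1/k)^(2:ℕ) by
    rw [← Real.rpow_natCast (1/k) 2]; norm_num]
  have hπ := Real.pi_pos
  field_simp

lemma radial_integrable (k : ℝ) (hk : 0 < k) :
    IntegrableOn (fun r : ℝ => r * Real.exp (-(k * r)) / (4 * Real.pi)) (Ioi 0) := by
  have h := integrableOn_rpow_mul_exp_neg_mul_rpow (p := 1) (s := 1) (b := k)
    (by norm_num) zero_lt_one hk
  have h' : IntegrableOn (fun t : ℝ => t * Real.exp (-(k * t))) (Ioi 0) := by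
    refine h.congr_fun (fun t ht => ?_) measurableSet_Ioi
    beta_reduce
    rw [Real.rpow_one, neg_mul]
  exact h'.div_const _

lemma euclidean3_volume_ball :
    volume (ball (0 : EuclideanSpace ℝ (Fin 3)) 1) = ENNReal.ofReal (4 / 3 * Real.pi) := by
  rw [EuclideanSpace.volume_ball]
  have h1 : Real.Gamma ((Fintype.card (Fin 3) : ℝ) / 2 + 1) = 3 / 4 * Real.sqrt Real.pi := by
    have : (Fintype.card (Fin 3) : ℝ) / 2 + 1 = 3 / 2 + 1 := by norm_num [Fintype.card_fin]
    rw [this, Real.Gamma_add_one (by norm_num)]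
    have : (3:ℝ)/2 = 1/2 + 1 := by norm_num
    rw [this, Real.Gamma_add_one (by norm_num), Real.Gamma_one_half_eq]
    ring
  rw [h1]
  have hs : Real.sqrt Real.pi ^ Fintype.card (Fin 3) =
      Real.pi * Real.sqrt Real.pi := by
    rw [Fintype.card_fin, pow_succ, sq, Real.mul_self_sqrt Real.pi_pos.le]
  rw [hs]
  have hsp : (0:ℝ) < Real.sqrt Real.pi := Real.sqrt_pos.2 Real.pi_pos
  rw [ENNReal.ofReal_one, one_pow, one_mul]
  congr 1
  field_simp

lemma radial_lintegral (k : ℝ) (hk : 0 < k) :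
    (∫⁻ z : EuclideanSpace ℝ (Fin 3),
      ENNReal.ofReal (Real.exp (-(k * ‖z‖)) / (4 * Real.pi * ‖z‖))) =
      ENNReal.ofReal (1 / k ^ 2) := by
  set g : ℝ → ℝ≥0∞ := fun r => ENNReal.ofReal (Real.exp (-(k * r)) / (4 * Real.pi * r))
    with hgdef
  have hgm : Measurable g :=
    ((Real.measurable_exp.comp ((measurable_const.mul measurable_id).neg)).div
      (measurable_const.mul measurable_id)).ennreal_ofReal
  have hdim : Module.finrank ℝ (EuclideanSpace ℝ (Fin 3)) = 3 := by
    simp [finrank_euclideanSpace]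
  have step1 : (∫⁻ z : EuclideanSpace ℝ (Fin 3), g ‖z‖) =
      ∫⁻ z : ({0}ᶜ : Set (EuclideanSpace ℝ (Fin 3))), g ‖z.1‖
        ∂(volume.comap Subtype.val) := by
    rw [lintegral_subtype_comap (measurableSet_singleton 0).compl
      (fun z => g ‖z‖), MeasureTheory.restrict_compl_singleton]
  have step2 : (∫⁻ z : ({0}ᶜ : Set (EuclideanSpace ℝ (Fin 3))),
        g ‖z.1‖ ∂(volume.comap Subtype.val)) =
      ∫⁻ p : sphere (0 : EuclideanSpace ℝ (Fin 3)) 1 × Ioi (0:ℝ), g p.2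
        ∂((volume.toSphere).prod
          (volumeIoiPow (Module.finrank ℝ (EuclideanSpace ℝ (Fin 3)) - 1))) := by
    have h := (volume.measurePreserving_homeomorphUnitSphereProd).lintegral_comp_emb
      (Homeomorph.measurableEmbedding _)
      (fun p : sphere (0 : EuclideanSpace ℝ (Fin 3)) 1 × Ioi (0:ℝ) => g p.2)
    simp only [homeomorphUnitSphereProd_apply_snd_coe] at h
    exact h.symm ▸ rfl
  have hdim2 : Module.finrank ℝ (EuclideanSpace ℝ (Fin 3)) - 1 = 2 := by rw [hdim]
  have step3 : (∫⁻ p : sphere (0 : EuclideanSpace ℝ (Fin 3)) 1 × Ioi (0:ℝ), g p.2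
        ∂((volume.toSphere).prod
          (volumeIoiPow (Module.finrank ℝ (EuclideanSpace ℝ (Fin 3)) - 1)))) =
      ((volume : Measure (EuclideanSpace ℝ (Fin 3))).toSphere (univ : Set (sphere (0 : EuclideanSpace ℝ (Fin 3)) 1))) * ∫⁻ r : Ioi (0:ℝ), g r ∂(volumeIoiPow 2) := by
    rw [hdim2]
    have hm : Measurable (fun p : sphere (0 : EuclideanSpace ℝ (Fin 3)) 1 × Ioi (0:ℝ) =>
        g ↑p.2) := hgm.comp (measurable_subtype_coe.comp measurable_snd)
    rw [lintegral_prod _ hm.aemeasurable]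
    simp only [Prod.snd]
    rw [lintegral_const, mul_comm]
  have step4 : (∫⁻ r : Ioi (0:ℝ), g r ∂(volumeIoiPow 2)) =
      ∫⁻ r in Ioi (0:ℝ), ENNReal.ofReal (r ^ 2) * g r := by
    have hg2 : Measurable (fun r : Ioi (0:ℝ) => g ↑r) := hgm.comp measurable_subtype_coe
    rw [Measure.volumeIoiPow,
      lintegral_withDensity_eq_lintegral_mul _
        ((measurable_subtype_coe.pow_const 2).ennreal_ofReal) hg2]
    simp only [Pi.mul_apply]
    exact lintegral_subtype_comap measurableSet_Ioi
      (fun r : ℝ => ENNReal.ofReal (r ^ 2) * g r)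
  have step5 : (∫⁻ r in Ioi (0:ℝ), ENNReal.ofReal (r ^ 2) * g r) =
      ENNReal.ofReal (1 / (4 * Real.pi * k ^ 2)) := by
    have hcong : ∀ᵐ r ∂volume, r ∈ Ioi (0:ℝ) →
        ENNReal.ofReal (r ^ 2) * g r =
          ENNReal.ofReal (r * Real.exp (-(k * r)) / (4 * Real.pi)) := by
      filter_upwards with r hr
      rw [hgdef]
      dsimp only
      rw [← ENNReal.ofReal_mul (by positivity)]
      congr 1
      have hπ := Real.pi_pos
      have hr0 : (0:ℝ) < r := hr
      field_simp
    rw [setLIntegral_congr_fun_ae measurableSet_Ioi hcong,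
      ← ofReal_integral_eq_lintegral_ofReal (radial_integrable k hk) ?_,
      radial_real_integral k hk]
    filter_upwards [ae_restrict_mem measurableSet_Ioi] with r hr
    have hπ := Real.pi_pos
    have : (0:ℝ) < r := hr
    positivity
  have hsphere : volume.toSphere (univ : Set (sphere (0 : EuclideanSpace ℝ (Fin 3)) 1)) =
      ENNReal.ofReal (4 * Real.pi) := by
    rw [Measure.toSphere_apply_univ, hdim, euclidean3_volume_ball]
    rw [show ((3:ℕ):ℝ≥0∞) = ENNReal.ofReal 3 by simp]
    rw [← ENNReal.ofReal_mul (by norm_num)]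
    congr 1
    ring
  rw [show (fun z : EuclideanSpace ℝ (Fin 3) =>
      ENNReal.ofReal (Real.exp (-(k * ‖z‖)) / (4 * Real.pi * ‖z‖))) =
      fun z : EuclideanSpace ℝ (Fin 3) => g ‖z‖ from rfl]
  rw [step1, step2, step3, step4, step5, hsphere,
    ← ENNReal.ofReal_mul (by positivity)]
  congr 1
  have hπ := Real.pi_pos
  field_simp

set_option maxHeartbeats 4000000 in
/-- If `0 ≤ G(x,y) ≤ e^{-k|x-y|}/(4π|x-y|)` on `D × D`, `|f| ≤ μ`, and a bounded
measurable `u` satisfies `u(x) = -∫_D G(x,y) f(u(y)) dy` on `D`, then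
`sup_{x ∈ D} |u(x)| ≤ μ/k²`. -/
theorem sup_bound_of_integral_equation (D : Set (EuclideanSpace ℝ (Fin 3)))
    (hD_meas : MeasurableSet D) (hD_bdd : Bornology.IsBounded D)
    (k : ℝ) (hk : 0 < k) (μ : ℝ) (hμ : 0 < μ)
    (G : EuclideanSpace ℝ (Fin 3) → EuclideanSpace ℝ (Fin 3) → ℝ)
    (hG_meas : Measurable fun p : EuclideanSpace ℝ (Fin 3) × EuclideanSpace ℝ (Fin 3) =>
      G p.1 p.2)
    (hG_nonneg : ∀ x ∈ D, ∀ y ∈ D, x ≠ y → 0 ≤ G x y)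
    (hG_le : ∀ x ∈ D, ∀ y ∈ D, x ≠ y →
      G x y ≤ Real.exp (-(k * ‖x - y‖)) / (4 * Real.pi * ‖x - y‖))
    (u : EuclideanSpace ℝ (Fin 3) → ℝ) (hu_meas : Measurable u)
    (hu_bdd : ∃ C : ℝ, ∀ x ∈ D, |u x| ≤ C)
    (f : ℝ → ℝ) (hf : ∀ t : ℝ, |f t| ≤ μ)
    (heq : ∀ x ∈ D, u x = -∫ y in D, G x y * f (u y)) :
    ∀ x ∈ D, |u x| ≤ μ / k ^ 2 := by
  intro x hx
  have hπ := Real.pi_pos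
  set B : EuclideanSpace ℝ (Fin 3) → ℝ :=
    fun y => μ * (Real.exp (-(k * ‖x - y‖)) / (4 * Real.pi * ‖x - y‖)) with hB
  have hmeasB : Measurable fun y : EuclideanSpace ℝ (Fin 3) =>
      ENNReal.ofReal (Real.exp (-(k * ‖x - y‖)) / (4 * Real.pi * ‖x - y‖)) := by
    have hn : Measurable fun y : EuclideanSpace ℝ (Fin 3) => ‖x - y‖ :=
      (measurable_const.sub measurable_id).norm
    exact ((Real.measurable_exp.comp ((measurable_const.mul hn).neg)).div
      (measurable_const.mul hn)).ennreal_ofReal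
  have hmeasB' : Measurable fun z : EuclideanSpace ℝ (Fin 3) =>
      ENNReal.ofReal (Real.exp (-(k * ‖z‖)) / (4 * Real.pi * ‖z‖)) :=
    ((Real.measurable_exp.comp ((measurable_const.mul measurable_norm).neg)).div
      (measurable_const.mul measurable_norm)).ennreal_ofReal
  have hxne : ∀ᵐ y ∂(volume.restrict D), y ≠ x := by
    refine ae_restrict_of_ae ?_
    rw [ae_iff]
    simp only [ne_eq, not_not, Set.setOf_eq_eq_singleton]
    exact measure_singleton x
  have hbound : ∀ᵐ y ∂(volume.restrict D),
      ENNReal.ofReal ‖G x y * f (u y)‖ ≤ ENNReal.ofReal (B y) := by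
    filter_upwards [ae_restrict_mem hD_meas, hxne] with y hyD hyx
    refine ENNReal.ofReal_le_ofReal ?_
    have hxy : x ≠ y := fun h => hyx h.symm
    have h1 : 0 ≤ G x y := hG_nonneg x hx y hyD hxy
    have h2 : G x y ≤ Real.exp (-(k * ‖x - y‖)) / (4 * Real.pi * ‖x - y‖) :=
      hG_le x hx y hyD hxy
    have h3 : |f (u y)| ≤ μ := hf (u y)
    rw [norm_mul, Real.norm_eq_abs, Real.norm_eq_abs, abs_of_nonneg h1, hB]
    calc G x y * |f (u y)| ≤
        (Real.exp (-(k * ‖x - y‖)) / (4 * Real.pi * ‖x - y‖)) * μ :=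
          mul_le_mul h2 h3 (abs_nonneg _) (le_trans h1 h2)
      _ = μ * (Real.exp (-(k * ‖x - y‖)) / (4 * Real.pi * ‖x - y‖)) := mul_comm _ _
  have hlint : (∫⁻ y in D, ENNReal.ofReal ‖G x y * f (u y)‖) ≤
      ENNReal.ofReal (μ / k ^ 2) := by
    calc (∫⁻ y in D, ENNReal.ofReal ‖G x y * f (u y)‖)
        ≤ ∫⁻ y in D, ENNReal.ofReal (B y) := lintegral_mono_ae hbound
      _ ≤ ∫⁻ y, ENNReal.ofReal (B y) := setLIntegral_le_lintegral _ _
      _ = ENNReal.ofReal μ * ∫⁻ y : EuclideanSpace ℝ (Fin 3),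
            ENNReal.ofReal (Real.exp (-(k * ‖x - y‖)) / (4 * Real.pi * ‖x - y‖)) := by
          simp only [hB, ENNReal.ofReal_mul hμ.le]
          rw [lintegral_const_mul' _ _ ENNReal.ofReal_ne_top]
      _ = ENNReal.ofReal μ * ∫⁻ z : EuclideanSpace ℝ (Fin 3),
            ENNReal.ofReal (Real.exp (-(k * ‖z‖)) / (4 * Real.pi * ‖z‖)) := by
          congr 1
          have hmp : MeasurePreserving (fun y : EuclideanSpace ℝ (Fin 3) => x - y)
              volume volume := Measure.measurePreserving_sub_left volume x
          exact hmp.lintegral_comp hmeasB'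
      _ = ENNReal.ofReal μ * ENNReal.ofReal (1 / k ^ 2) := by
          rw [radial_lintegral k hk]
      _ = ENNReal.ofReal (μ / k ^ 2) := by
          rw [← ENNReal.ofReal_mul hμ.le]
          congr 1
          field_simp
  have habs : |u x| ≤ (∫⁻ y in D, ENNReal.ofReal ‖G x y * f (u y)‖).toReal := by
    rw [heq x hx, abs_neg, ← Real.norm_eq_abs]
    exact norm_integral_le_lintegral_norm _
  exact habs.trans (ENNReal.toReal_le_of_le_ofReal (by positivity) hlint)
end
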